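/- Define φ : ℕ × ℕ → ℕ by φ(n, l) = g(n+1, l+1), where g is as above. Then φ(n, l) ≤ l for all n, l; φ(n, 0) = 0 and φ(n, 1) = 1; the sequence l ↦ φ(n, l) is non-decreasing and bounded above; and its limit θ(n) = lim_{l→∞} φ(n, l) equals f(n+1). -/
import Mathlib

/-- An equation from `E_n`: `x_k = 1`, `x_i + x_j = x_k`, or `x_i * x_j = x_k`. -/
inductive Eqn (n : ℕ) : Type where
  | one (k : Fin n)
  | add (i j k : Fin n)
  | mul (i j k : Fin n)

def Eqn.holds {n : ℕ} (x : Fin n → ℕ) : Eqn n → Prop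
  | .one k => x k = 1
  | .add i j k => x i + x j = x k
  | .mul i j k => x i * x j = x k

/-- `x` solves the system `S ⊆ E_n`. -/
def Solves {n : ℕ} (x : Fin n → ℕ) (S : Set (Eqn n)) : Prop :=
  ∀ e ∈ S, e.holds x

/-- Every solvable system `S ⊆ E_n` has a solution with all values `≤ b`. -/
def IsBound (n b : ℕ) : Prop :=
  ∀ S : Set (Eqn n), (∃ x, Solves x S) → ∃ x, Solves x S ∧ ∀ i, x i ≤ b

/-- `f n` is the smallest such bound. -/
noncomputable def f (n : ℕ) : ℕ := sInf {b | IsBound n b}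

/-- `y` is a duplicate of `x`. -/
def Dup {n : ℕ} (x y : Fin n → ℕ) : Prop :=
  (∀ k, x k = 1 → y k = 1) ∧
  (∀ i j k, x i + x j = x k → y i + y j = y k) ∧
  (∀ i j k, x i * x j = x k → y i * y j = y k)

/-- Every `x : ℕⁿ` has a duplicate in `{0,…,b}ⁿ`. -/
def DupBound (n b : ℕ) : Prop :=
  ∀ x : Fin n → ℕ, ∃ y, Dup x y ∧ ∀ i, y i ≤ b

/-- `f` expressed via duplicates. -/
noncomputable def fdup (n : ℕ) : ℕ := sInf {b | DupBound n b}

/-- `g n m` : smallest `b` such that every `x ∈ {0,…,m-1}ⁿ` has a duplicate in `{0,…,b}ⁿ`. -/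
noncomputable def g (n m : ℕ) : ℕ :=
  sInf {b | ∀ x : Fin n → ℕ, (∀ i, x i < m) → ∃ y, Dup x y ∧ ∀ i, y i ≤ b}

noncomputable def φ (n l : ℕ) : ℕ := g (n + 1) (l + 1)

/- ### Auxiliary lemmas -/

instance {n : ℕ} : Finite (Eqn n) := by
  have h : Function.Injective (fun e : Eqn n => match e with
    | .one k => (Sum.inl k : Fin n ⊕ ((Fin n × Fin n × Fin n) ⊕ (Fin n × Fin n × Fin n)))
    | .add i j k => Sum.inr (Sum.inl (i, j, k))
    | .mul i j k => Sum.inr (Sum.inr (i, j, k))) := by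
    intro a b hab
    cases a <;> cases b <;> simp_all
  exact Finite.of_injective _ h

def sat {n : ℕ} (x : Fin n → ℕ) : Set (Eqn n) := {e | e.holds x}

lemma dup_iff {n : ℕ} (x y : Fin n → ℕ) : Dup x y ↔ Solves y (sat x) := by
  constructor
  · rintro ⟨h1, h2, h3⟩ e he
    cases e with
    | one k => exact h1 k he
    | add i j k => exact h2 i j k he
    | mul i j k => exact h3 i j k he
  · intro h
    exact ⟨fun k hk => h (.one k) hk, fun i j k hk => h (.add i j k) hk,
      fun i j k hk => h (.mul i j k) hk⟩

lemma dup_refl {n : ℕ} (x : Fin n → ℕ) : Dup x x :=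
  ⟨fun _ h => h, fun _ _ _ h => h, fun _ _ _ h => h⟩

lemma exists_dupBound (n : ℕ) : ∃ b, DupBound n b := by
  classical
  have hc : ∀ S : Set (Eqn n), ∃ y : Fin n → ℕ, (∃ x, Solves x S) → Solves y S := by
    intro S
    by_cases h : ∃ x, Solves x S
    · exact ⟨h.choose, fun _ => h.choose_spec⟩
    · exact ⟨0, fun hx => absurd hx h⟩
  choose T hT using hc
  obtain ⟨b, hb⟩ := Set.Finite.bddAbove
    (Set.finite_range (fun p : Set (Eqn n) × Fin n => T p.1 p.2))
  refine ⟨b, fun x => ⟨T (sat x), ?_, fun i => hb (Set.mem_range_self (sat x, i))⟩⟩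
  rw [dup_iff]
  exact hT (sat x) ⟨x, fun e he => he⟩

/-- The defining set of `g n m`. -/
def Gset (n m : ℕ) : Set ℕ :=
  {b | ∀ x : Fin n → ℕ, (∀ i, x i < m) → ∃ y, Dup x y ∧ ∀ i, y i ≤ b}

lemma g_def' (n m : ℕ) : g n m = sInf (Gset n m) := rfl

lemma fdup_mem (n : ℕ) : DupBound n (fdup n) :=
  Nat.sInf_mem (exists_dupBound n)

lemma fdup_mem_Gset (n m : ℕ) : fdup n ∈ Gset n m :=
  fun x _ => fdup_mem n x

lemma g_le_fdup (n m : ℕ) : g n m ≤ fdup n :=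
  Nat.sInf_le (fdup_mem_Gset n m)

lemma phi_le (n l : ℕ) : φ n l ≤ l := by
  apply Nat.sInf_le
  intro x hx
  exact ⟨x, dup_refl x, fun i => Nat.lt_succ_iff.mp (hx i)⟩

lemma phi_mono (n : ℕ) : Monotone (φ n) := by
  intro l l' hll'
  refine csInf_le_csInf (OrderBot.bddBelow _) ⟨fdup (n + 1), fdup_mem_Gset _ _⟩ ?_
  intro b hb x hx
  exact hb x (fun i => lt_of_lt_of_le (hx i) (by omega))

theorem stmt16 (n : ℕ) :
    (∀ l, φ n l ≤ l) ∧ φ n 0 = 0 ∧ φ n 1 = 1 ∧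
    Monotone (φ n) ∧ (∃ B, ∀ l, φ n l ≤ B) ∧
    Filter.Tendsto (φ n) Filter.atTop (nhds (fdup (n + 1))) := by
  refine ⟨phi_le n, Nat.le_zero.mp (phi_le n 0), ?_, phi_mono n,
    ⟨fdup (n + 1), fun l => g_le_fdup _ _⟩, ?_⟩
  · -- φ n 1 = 1
    refine le_antisymm (phi_le n 1) ?_
    have hmem : φ n 1 ∈ Gset (n + 1) 2 :=
      Nat.sInf_mem ⟨fdup (n + 1), fdup_mem_Gset _ _⟩
    obtain ⟨y, hy, hyb⟩ := hmem (fun _ => 1) (fun _ => one_lt_two)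
    have h1 : y 0 = 1 := hy.1 0 rfl
    calc 1 = y 0 := h1.symm
    _ ≤ φ n 1 := hyb 0
  · -- the limit
    have key : ∃ L, ∀ l, L ≤ l → φ n l = fdup (n + 1) := by
      by_cases h0 : fdup (n + 1) = 0
      · refine ⟨0, fun l _ => ?_⟩
        have h1 : φ n l ≤ fdup (n + 1) := g_le_fdup _ _
        omega
      · have hnot : ¬ DupBound (n + 1) (fdup (n + 1) - 1) := by
          intro hd
          have h2 : fdup (n + 1) ≤ fdup (n + 1) - 1 :=
            Nat.sInf_le (show fdup (n+1) - 1 ∈ {b | DupBound (n+1) b} from hd)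
          omega
        rw [DupBound] at hnot
        push_neg at hnot
        obtain ⟨x, hx⟩ := hnot
        refine ⟨Finset.univ.sup x, fun l hl => ?_⟩
        refine le_antisymm (g_le_fdup _ _) ?_
        have hmem : φ n l ∈ Gset (n + 1) (l + 1) :=
          Nat.sInf_mem ⟨fdup (n + 1), fdup_mem_Gset _ _⟩
        obtain ⟨y, hy, hyb⟩ := hmem x (fun i =>
          Nat.lt_succ_of_le (le_trans (Finset.le_sup (Finset.mem_univ i)) hl))
        obtain ⟨i, hi⟩ := hx y hy
        have := hyb i
        omega
    obtain ⟨L, hL⟩ := key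
    apply Filter.Tendsto.congr' (f₁ := fun _ => fdup (n + 1))
    · filter_upwards [Filter.eventually_ge_atTop L] with l hl
      exact (hL l hl).symm
    · exact tendsto_const_nhds
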